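/- Let n ≥ 3 and κ₁, κ₂, κ₋₁, κ₋, κ₃ > 0, and let G(v) = 2κ₁(U(v) − v) − (2κ₋₁ + nκ₂)U(v) + κ₋ n (2U(v) − nv)/(2(n−2)), where U(v) = (v + √(v² + 4κ₋/κ₃))/2. Then G is strictly decreasing on ℝ and has a unique zero v*. -/

import Mathlib

set_option maxHeartbeats 1000000

theorem G_strict_anti_unique_zero (n : ℕ) (hn : 3 ≤ n)
    (κ₁ κ₂ κm1 κm κ₃ : ℝ) (h1 : 0 < κ₁) (h2 : 0 < κ₂) (hm1 : 0 < κm1)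
    (hm : 0 < κm) (h3 : 0 < κ₃)
    (U G : ℝ → ℝ)
    (hU : ∀ v, U v = (v + Real.sqrt (v ^ 2 + 4 * κm / κ₃)) / 2)
    (hG : ∀ v, G v = 2 * κ₁ * (U v - v) - (2 * κm1 + (n : ℝ) * κ₂) * U v +
      κm * (n : ℝ) * (2 * U v - (n : ℝ) * v) / (2 * ((n : ℝ) - 2))) :
    StrictAnti G ∧ ∃! v : ℝ, G v = 0 := by
  have hn3 : (3 : ℝ) ≤ (n : ℝ) := by exact_mod_cast hn
  have hn0 : (0 : ℝ) < (n : ℝ) := by linarith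
  have hn2 : (0 : ℝ) < 2 * ((n : ℝ) - 2) := by linarith
  set c : ℝ := 4 * κm / κ₃ with hc_def
  have hc : 0 < c := by positivity
  set s : ℝ := Real.sqrt c with hs_def
  have hs0 : 0 ≤ s := Real.sqrt_nonneg c
  have hsq : s ^ 2 = c := Real.sq_sqrt hc.le
  have hs : ∀ v : ℝ, |v| < Real.sqrt (v ^ 2 + c) := by
    intro v
    have h1 : Real.sqrt (v ^ 2) < Real.sqrt (v ^ 2 + c) :=
      Real.sqrt_lt_sqrt (sq_nonneg v) (by linarith)
    rwa [Real.sqrt_sq_eq_abs] at h1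
  have hsle : ∀ v : ℝ, Real.sqrt (v ^ 2 + c) ≤ |v| + s := by
    intro v
    have h2 : v ^ 2 + c ≤ (|v| + s) ^ 2 := by nlinarith [sq_abs v, abs_nonneg v]
    calc Real.sqrt (v ^ 2 + c) ≤ Real.sqrt ((|v| + s) ^ 2) := Real.sqrt_le_sqrt h2
      _ = |v| + s := Real.sqrt_sq (by positivity)
  have hUpos : ∀ v, 0 < U v := by
    intro v
    rw [hU]
    have h := hs v
    have h2 := neg_abs_le v
    linarith
  have hUgt : ∀ v, v < U v := by
    intro v
    rw [hU]
    have h := hs v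
    have h2 := le_abs_self v
    linarith
  have hUle : ∀ v, U v ≤ (v + |v| + s) / 2 := by
    intro v
    rw [hU]
    have h := hsle v
    linarith
  have hkey : ∀ x y : ℝ, x < y → 0 < U y - U x ∧ U y - U x < y - x := by
    intro x y hxy
    have hSx2 : Real.sqrt (x ^ 2 + c) ^ 2 = x ^ 2 + c := Real.sq_sqrt (by positivity)
    have hSy2 : Real.sqrt (y ^ 2 + c) ^ 2 = y ^ 2 + c := Real.sq_sqrt (by positivity)
    set Sx := Real.sqrt (x ^ 2 + c)
    set Sy := Real.sqrt (y ^ 2 + c)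
    have hx := hs x
    have hy := hs y
    have hxx : x < Sx := lt_of_le_of_lt (le_abs_self x) hx
    have hxn : -x < Sx := lt_of_le_of_lt (neg_le_abs x) hx
    have hyy : y < Sy := lt_of_le_of_lt (le_abs_self y) hy
    have hyn : -y < Sy := lt_of_le_of_lt (neg_le_abs y) hy
    have hprod : (Sy - Sx) * (Sy + Sx) = (y - x) * (y + x) := by
      linear_combination hSy2 - hSx2
    have hd : (0 : ℝ) < y - x := by linarith
    have h5 : Sy - Sx < y - x := by
      nlinarith [mul_pos hd (show 0 < Sy + Sx - y - x by linarith)]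
    have h6 : -(y - x) < Sy - Sx := by
      nlinarith [mul_pos hd (show 0 < Sy + Sx + y + x by linarith)]
    rw [hU, hU]
    constructor <;> linarith
  have hC : 0 < 2 * κm1 + (n : ℝ) * κ₂ := by nlinarith
  have hSA : StrictAnti G := by
    intro x y hxy
    obtain ⟨hpos, hlt⟩ := hkey x y hxy
    rw [hG, hG]
    have hF : κm * (n : ℝ) * (2 * U y - (n : ℝ) * y) < κm * (n : ℝ) * (2 * U x - (n : ℝ) * x) := by
      have hnum : 2 * U y - (n : ℝ) * y < 2 * U x - (n : ℝ) * x := by nlinarith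
      have hkmn : 0 < κm * (n : ℝ) := by positivity
      exact mul_lt_mul_of_pos_left hnum hkmn
    have hFd : κm * (n : ℝ) * (2 * U y - (n : ℝ) * y) / (2 * ((n : ℝ) - 2)) <
        κm * (n : ℝ) * (2 * U x - (n : ℝ) * x) / (2 * ((n : ℝ) - 2)) :=
      (div_lt_div_iff_of_pos_right hn2).mpr hF
    have hE : 2 * κ₁ * (U y - y) - (2 * κm1 + (n : ℝ) * κ₂) * U y <
        2 * κ₁ * (U x - x) - (2 * κm1 + (n : ℝ) * κ₂) * U x := by
      nlinarith [mul_pos h1 (show 0 < (y - x) - (U y - U x) by linarith),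
        mul_pos hC hpos]
    linarith
  refine ⟨hSA, ?_⟩
  have hcont : Continuous G := by
    have hGfun : G = fun v => 2 * κ₁ * ((v + Real.sqrt (v ^ 2 + c)) / 2 - v) -
        (2 * κm1 + (n : ℝ) * κ₂) * ((v + Real.sqrt (v ^ 2 + c)) / 2) +
        κm * (n : ℝ) * (2 * ((v + Real.sqrt (v ^ 2 + c)) / 2) - (n : ℝ) * v) /
          (2 * ((n : ℝ) - 2)) := by
      funext v
      rw [hG, hU]
    rw [hGfun]
    fun_prop
  set a : ℝ := -((2 * κm1 + (n : ℝ) * κ₂) * s / 2 + 1) / (2 * κ₁) with hadef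
  set b : ℝ := (κ₁ * s + κm * (n : ℝ) * s / (2 * ((n : ℝ) - 2)) + 1) /
    (2 * κm1 + (n : ℝ) * κ₂) with hbdef
  have hM0 : 0 ≤ κm * (n : ℝ) * s / (2 * ((n : ℝ) - 2)) := by positivity
  have ha_neg : a < 0 := by
    rw [hadef]
    apply div_neg_of_neg_of_pos
    · nlinarith
    · linarith
  have hb_pos : 0 < b := by
    rw [hbdef]
    apply div_pos
    · nlinarith
    · exact hC
  have ha_val : 2 * κ₁ * a = -((2 * κm1 + (n : ℝ) * κ₂) * s / 2 + 1) := by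
    rw [hadef]; field_simp
  have hb_val : (2 * κm1 + (n : ℝ) * κ₂) * b =
      κ₁ * s + κm * (n : ℝ) * s / (2 * ((n : ℝ) - 2)) + 1 := by
    rw [hbdef]; field_simp
  have hGa : 0 < G a := by
    rw [hG a]
    have hUa_pos := hUpos a
    have hUa_le : U a ≤ s / 2 := by
      have h := hUle a
      rw [abs_of_nonpos ha_neg.le] at h
      linarith
    have hterm : 0 < κm * (n : ℝ) * (2 * U a - (n : ℝ) * a) / (2 * ((n : ℝ) - 2)) := by
      apply div_pos _ hn2
      have hnum : 0 < 2 * U a - (n : ℝ) * a := by nlinarith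
      positivity
    have e1 : 2 * κ₁ * (U a - a) ≥ -(2 * κ₁ * a) := by nlinarith
    have e2 : (2 * κm1 + (n : ℝ) * κ₂) * U a ≤ (2 * κm1 + (n : ℝ) * κ₂) * (s / 2) :=
      mul_le_mul_of_nonneg_left hUa_le hC.le
    nlinarith
  have hGb : G b < 0 := by
    rw [hG b]
    have hUb_gt := hUgt b
    have hUb_le : U b ≤ b + s / 2 := by
      have h := hUle b
      rw [abs_of_nonneg hb_pos.le] at h
      linarith
    have hnum : κm * (n : ℝ) * (2 * U b - (n : ℝ) * b) ≤ κm * (n : ℝ) * s := by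
      have hx : 2 * U b - (n : ℝ) * b ≤ s := by nlinarith
      exact mul_le_mul_of_nonneg_left hx (by positivity)
    have hterm : κm * (n : ℝ) * (2 * U b - (n : ℝ) * b) / (2 * ((n : ℝ) - 2)) ≤
        κm * (n : ℝ) * s / (2 * ((n : ℝ) - 2)) :=
      (div_le_div_iff_of_pos_right hn2).mpr hnum
    have e1 : 2 * κ₁ * (U b - b) ≤ κ₁ * s := by nlinarith
    have e2 : (2 * κm1 + (n : ℝ) * κ₂) * b ≤ (2 * κm1 + (n : ℝ) * κ₂) * U b :=
      mul_le_mul_of_nonneg_left hUb_gt.le hC.le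
    linarith
  have hab : a ≤ b := le_of_lt (ha_neg.trans hb_pos)
  obtain ⟨v, _, hv⟩ := intermediate_value_Icc' hab hcont.continuousOn ⟨hGb.le, hGa.le⟩
  exact ⟨v, hv, fun w hw => hSA.injective (hw.trans hv.symm)⟩
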